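/- arXiv:1202.5703 — 3 statements merged into one kernel-verified Lean document; each statement's English description precedes it below -/
import Mathlib

section
/- Let M ∈ ℕ and r₁ ≤ r₂ ≤ … ≤ r_{M+1} be positive integers, and let ω_r = e^{2πi/r}. If z_{i}^{(j)} ∈ ℂ with |z_i^{(j)}| ≤ 1 for all 1 ≤ j ≤ M and 0 ≤ i ≤ r_j − 1, then |Σ_{i₁=0}^{r₁−1} ⋯ Σ_{i_M=0}^{r_M−1} z_{i₁}^{(1)} ⋯ z_{i_M}^{(M)} ω_{r₂}^{i₁ i₂} ω_{r₃}^{i₂ i₃} ⋯ ω_{r_M}^{i_{M−1} i_M}| ≤ (r₁ r₂ ⋯ r_{M+1})^{1/2}. -/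
open Complex Finset

noncomputable def wee (n m : ℕ) : ℂ := Complex.exp (2 * Real.pi * Complex.I / n) ^ m

noncomputable def wQ (r : ℕ → ℕ) (z : ℕ → ℕ → ℂ) : ℕ → ℕ → ℂ
  | 0, _ => 1
  | (M+1), k => ∑ a ∈ Finset.range (r (M+1)), z (M+1) a * wee (r (M+2)) (a * k) * wQ r z M a

lemma wQ_eq (r : ℕ → ℕ) (z : ℕ → ℕ → ℂ) :
    ∀ M k, (∑ i ∈ Fintype.piFinset (fun j : Fin M => Finset.range (r (j.1 + 1))),
        (∏ j : Fin M, z (j.1 + 1) (i j)) *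
        ∏ j : Fin M, (if h : j.1 + 1 < M then
            wee (r (j.1 + 2)) (i j * i ⟨j.1 + 1, h⟩)
          else wee (r (M + 1)) (i j * k))) = wQ r z M k := by
  intro M
  induction M with
  | zero => intro k; simp [wQ]
  | succ M ih =>
    intro k
    rw [wQ]
    have hsplit : ∀ F : (Fin (M+1) → ℕ) → ℂ,
        (∑ i ∈ Fintype.piFinset (fun j : Fin (M+1) => Finset.range (r (j.1 + 1))), F i)
        = ∑ p ∈ (Fintype.piFinset (fun j : Fin M => Finset.range (r (j.1 + 1)))) ×ˢ
            Finset.range (r (M+1)), F (Fin.snoc p.1 p.2) := by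
      intro F
      refine Finset.sum_nbij' (fun f => (Fin.init f, f (Fin.last M)))
        (fun p => Fin.snoc p.1 p.2) ?_ ?_ ?_ ?_ ?_
      · intro f hf
        simp only [Fintype.mem_piFinset] at hf
        simp only [Finset.mem_product, Fintype.mem_piFinset]
        constructor
        · intro j
          have := hf (Fin.castSucc j)
          simpa [Fin.init] using this
        · simpa using hf (Fin.last M)
      · intro p hp
        simp only [Finset.mem_product, Fintype.mem_piFinset] at hp
        simp only [Fintype.mem_piFinset]
        intro j
        rcases Nat.lt_or_ge j.1 M with h | h
        · have : j = Fin.castSucc ⟨j.1, h⟩ := by ext; rfl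
          rw [this, Fin.snoc_castSucc]
          exact hp.1 _
        · have : j = Fin.last M := by
            ext; exact le_antisymm (Nat.lt_succ_iff.mp j.2) h
          rw [this, Fin.snoc_last]
          simpa using hp.2
      · intro f _; exact Fin.snoc_init_self f
      · intro p _
        ext
        · simp [Fin.init]
        · simp
      · intro f _
        rw [Fin.snoc_init_self]
    rw [hsplit, Finset.sum_product_right]
    refine Finset.sum_congr rfl ?_
    intro a ha
    rw [← ih a, Finset.mul_sum]
    refine Finset.sum_congr rfl ?_
    intro i hi
    -- compute both sides
    have hz : (∏ j : Fin (M+1), z (j.1 + 1) (Fin.snoc (α := fun _ => ℕ) i a j))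
        = (∏ j : Fin M, z (j.1 + 1) (i j)) * z (M+1) a := by
      rw [Fin.prod_univ_castSucc]
      simp
    have hw : (∏ j : Fin (M+1), (if h : j.1 + 1 < M + 1 then
            wee (r (j.1 + 2)) (Fin.snoc (α := fun _ => ℕ) i a j * Fin.snoc (α := fun _ => ℕ) i a ⟨j.1 + 1, h⟩)
          else wee (r (M + 1 + 1)) (Fin.snoc (α := fun _ => ℕ) i a j * k)))
        = wee (r (M+2)) (a * k) *
          ∏ j : Fin M, (if h : j.1 + 1 < M then
            wee (r (j.1 + 2)) (i j * i ⟨j.1 + 1, h⟩)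
          else wee (r (M + 1)) (i j * a)) := by
      rw [Fin.prod_univ_castSucc]
      have hlast : (if h : (Fin.last M).1 + 1 < M + 1 then
            wee (r ((Fin.last M).1 + 2)) (Fin.snoc (α := fun _ => ℕ) i a (Fin.last M) *
              Fin.snoc (α := fun _ => ℕ) i a ⟨(Fin.last M).1 + 1, h⟩)
          else wee (r (M + 1 + 1)) (Fin.snoc (α := fun _ => ℕ) i a (Fin.last M) * k))
          = wee (r (M+2)) (a * k) := by
        rw [dif_neg (by simp)]
        simp
      rw [hlast, mul_comm]
      congr 1
      refine Finset.prod_congr rfl ?_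
      intro j _
      simp only [Fin.coe_castSucc]
      rw [dif_pos (Nat.succ_lt_succ j.2)]
      rcases Nat.lt_or_ge (j.1 + 1) M with h | h
      · rw [dif_pos h]
        have h1 : (⟨j.1 + 1, Nat.succ_lt_succ j.2⟩ : Fin (M+1))
            = Fin.castSucc ⟨j.1 + 1, h⟩ := by ext; rfl
        rw [h1, Fin.snoc_castSucc, Fin.snoc_castSucc]
      · have hM : j.1 + 1 = M := le_antisymm (Nat.succ_le_of_lt j.2) h
        rw [dif_neg (by omega)]
        have h1 : (⟨j.1 + 1, Nat.succ_lt_succ j.2⟩ : Fin (M+1)) = Fin.last M := by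
          ext; exact hM
        rw [h1, Fin.snoc_last, Fin.snoc_castSucc]
        congr 2
        omega
    rw [hz, hw]
    ring

lemma wee_orth (n : ℕ) (hn : 0 < n) (a b : ℕ) (ha : a < n) (hb : b < n) :
    (∑ k ∈ Finset.range n, wee n (a * k) * (starRingEnd ℂ) (wee n (b * k)))
      = if a = b then (n : ℂ) else 0 := by
  have hζ : IsPrimitiveRoot (Complex.exp (2 * Real.pi * Complex.I / n)) n :=
    Complex.isPrimitiveRoot_exp n hn.ne'
  set ζ := Complex.exp (2 * Real.pi * Complex.I / n) with hζdef
  have hζ0 : ζ ≠ 0 := Complex.exp_ne_zero _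
  have hζ1 : ‖ζ‖ = 1 := by
    have h2 : 2 * (Real.pi : ℂ) * Complex.I / (n : ℂ)
        = ((2 * Real.pi / n : ℝ) : ℂ) * Complex.I := by push_cast; ring
    rw [hζdef, h2, Complex.norm_exp_ofReal_mul_I]
  have hconj : (starRingEnd ℂ) ζ = ζ⁻¹ := (Complex.inv_eq_conj hζ1).symm
  have hterm : ∀ k, wee n (a * k) * (starRingEnd ℂ) (wee n (b * k))
      = (ζ ^ a * (ζ ^ b)⁻¹) ^ k := by
    intro k
    rw [wee, wee, map_pow, hconj, ← hζdef, mul_pow, pow_mul, pow_mul, inv_pow]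
  rw [Finset.sum_congr rfl fun k _ => hterm k]
  by_cases hab : a = b
  · subst hab
    rw [mul_inv_cancel₀ (pow_ne_zero _ hζ0)]
    simp
  · rw [if_neg hab]
    have hu1 : ζ ^ a * (ζ ^ b)⁻¹ ≠ 1 := by
      intro h
      apply hab
      exact hζ.pow_inj ha hb (by field_simp at h; exact h)
    have hun : (ζ ^ a * (ζ ^ b)⁻¹) ^ n = 1 := by
      rw [mul_pow, inv_pow, ← pow_mul, ← pow_mul, mul_comm a n, mul_comm b n,
        pow_mul, pow_mul, hζ.pow_eq_one, one_pow, one_pow]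
      simp
    rw [geom_sum_eq hu1, hun]
    simp

lemma wQ_l2 (r : ℕ → ℕ) (z : ℕ → ℕ → ℂ) : ∀ M : ℕ,
    (∀ j, 1 ≤ j → j ≤ M → r j ≤ r (j + 1)) →
    (∀ j, 1 ≤ j → j ≤ M + 1 → 0 < r j) →
    (∀ j i, 1 ≤ j → j ≤ M → i < r j → ‖z j i‖ ≤ 1) →
    (∑ k ∈ Finset.range (r (M + 1)), ‖wQ r z M k‖ ^ 2)
      ≤ ∏ j ∈ Finset.range (M + 1), (r (j + 1) : ℝ) := by
  intro M
  induction M with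
  | zero =>
    intro _ _ _
    simp [wQ]
  | succ M ih =>
    intro hmono hpos hz
    have hn : 0 < r (M + 2) := hpos (M + 2) (by omega) (by omega)
    have hmn : r (M + 1) ≤ r (M + 2) := hmono (M + 1) (by omega) (by omega)
    have expand : ∀ k, wQ r z (M + 1) k * (starRingEnd ℂ) (wQ r z (M + 1) k)
        = ∑ a ∈ Finset.range (r (M + 1)), ∑ b ∈ Finset.range (r (M + 1)),
            (z (M + 1) a * (starRingEnd ℂ) (z (M + 1) b)) *
            (wQ r z M a * (starRingEnd ℂ) (wQ r z M b)) *
            (wee (r (M + 2)) (a * k) * (starRingEnd ℂ) (wee (r (M + 2)) (b * k))) := by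
      intro k
      rw [wQ, map_sum, Finset.sum_mul_sum]
      refine Finset.sum_congr rfl fun a _ => Finset.sum_congr rfl fun b _ => ?_
      simp only [map_mul]
      ring
    have main : (∑ k ∈ Finset.range (r (M + 2)),
          wQ r z (M + 1) k * (starRingEnd ℂ) (wQ r z (M + 1) k))
        = (r (M + 2) : ℂ) * ∑ a ∈ Finset.range (r (M + 1)),
            (Complex.normSq (z (M + 1) a) : ℂ) * (Complex.normSq (wQ r z M a) : ℂ) := by
      rw [Finset.sum_congr rfl fun k _ => expand k, Finset.sum_comm]
      rw [Finset.mul_sum]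
      refine Finset.sum_congr rfl fun a haa => ?_
      rw [Finset.sum_comm]
      have : ∀ b ∈ Finset.range (r (M + 1)),
          (∑ k ∈ Finset.range (r (M + 2)),
            (z (M + 1) a * (starRingEnd ℂ) (z (M + 1) b)) *
            (wQ r z M a * (starRingEnd ℂ) (wQ r z M b)) *
            (wee (r (M + 2)) (a * k) * (starRingEnd ℂ) (wee (r (M + 2)) (b * k))))
          = if a = b then (z (M + 1) a * (starRingEnd ℂ) (z (M + 1) b)) *
              (wQ r z M a * (starRingEnd ℂ) (wQ r z M b)) * (r (M + 2) : ℂ) else 0 := by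
        intro b hbb
        rw [← Finset.mul_sum, wee_orth (r (M + 2)) hn a b
          (lt_of_lt_of_le (Finset.mem_range.mp haa) hmn)
          (lt_of_lt_of_le (Finset.mem_range.mp hbb) hmn)]
        split_ifs with h
        · rfl
        · exact mul_zero _
      rw [Finset.sum_congr rfl this, Finset.sum_ite_eq (Finset.range (r (M + 1))) a _,
        if_pos haa, Complex.mul_conj, Complex.mul_conj]
      ring
    have hR : (∑ k ∈ Finset.range (r (M + 2)), Complex.normSq (wQ r z (M + 1) k))
        = (r (M + 2) : ℝ) * ∑ a ∈ Finset.range (r (M + 1)),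
            Complex.normSq (z (M + 1) a) * Complex.normSq (wQ r z M a) := by
      have : ((∑ k ∈ Finset.range (r (M + 2)), Complex.normSq (wQ r z (M + 1) k) : ℝ) : ℂ)
          = (((r (M + 2) : ℝ) * ∑ a ∈ Finset.range (r (M + 1)),
              Complex.normSq (z (M + 1) a) * Complex.normSq (wQ r z M a) : ℝ) : ℂ) := by
        push_cast
        rw [← main]
        refine Finset.sum_congr rfl fun k _ => ?_
        rw [Complex.mul_conj]
      exact_mod_cast this
    have habs : (∑ k ∈ Finset.range (r (M + 2)), ‖wQ r z (M + 1) k‖ ^ 2)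
        = (r (M + 2) : ℝ) * ∑ a ∈ Finset.range (r (M + 1)),
            Complex.normSq (z (M + 1) a) * Complex.normSq (wQ r z M a) := by
      rw [← hR]
      exact Finset.sum_congr rfl fun k _ => Complex.sq_norm _
    rw [habs]
    have step1 : (∑ a ∈ Finset.range (r (M + 1)),
          Complex.normSq (z (M + 1) a) * Complex.normSq (wQ r z M a))
        ≤ ∑ a ∈ Finset.range (r (M + 1)), Complex.normSq (wQ r z M a) := by
      refine Finset.sum_le_sum fun a haa => ?_
      have h1 : ‖z (M + 1) a‖ ≤ 1 :=
        hz (M + 1) a (by omega) (by omega) (Finset.mem_range.mp haa)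
      have h2 : Complex.normSq (z (M + 1) a) ≤ 1 := by
        rw [← Complex.sq_norm]
        nlinarith [norm_nonneg (z (M + 1) a)]
      nlinarith [Complex.normSq_nonneg (wQ r z M a)]
    have step2 : (∑ a ∈ Finset.range (r (M + 1)), Complex.normSq (wQ r z M a))
        ≤ ∏ j ∈ Finset.range (M + 1), (r (j + 1) : ℝ) := by
      have := ih (fun j h1 h2 => hmono j h1 (by omega))
        (fun j h1 h2 => hpos j h1 (by omega))
        (fun j i h1 h2 h3 => hz j i h1 (by omega) h3)
      refine le_trans (le_of_eq ?_) this
      exact Finset.sum_congr rfl fun k _ => (Complex.sq_norm _).symm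
    calc (r (M + 2) : ℝ) * ∑ a ∈ Finset.range (r (M + 1)),
          Complex.normSq (z (M + 1) a) * Complex.normSq (wQ r z M a)
        ≤ (r (M + 2) : ℝ) * ∑ a ∈ Finset.range (r (M + 1)), Complex.normSq (wQ r z M a) := by
          exact mul_le_mul_of_nonneg_left step1 (by positivity)
      _ ≤ (r (M + 2) : ℝ) * ∏ j ∈ Finset.range (M + 1), (r (j + 1) : ℝ) := by
          exact mul_le_mul_of_nonneg_left step2 (by positivity)
      _ = ∏ j ∈ Finset.range (M + 2), (r (j + 1) : ℝ) := by
          rw [mul_comm, ← Finset.prod_range_succ (fun j => (r (j + 1) : ℝ)) (M + 1)]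

/-- Hille–Bohnenblust sup-norm estimate: for `|z_i^{(j)}| ≤ 1`,
`|Σ z_{i₁}^{(1)} ⋯ z_{i_M}^{(M)} ω_{r₂}^{i₁i₂} ⋯ ω_{r_M}^{i_{M-1}i_M}| ≤ (r₁ ⋯ r_{M+1})^{1/2}`.
Here `r j` for `j = 1, …, M+1` are the sizes and `z j i` are the variables. -/
theorem walsh_Q_sup_bound (M : ℕ) (r : ℕ → ℕ)
    (hpos : ∀ j, 1 ≤ j → j ≤ M + 1 → 0 < r j)
    (hmono : ∀ j, 1 ≤ j → j ≤ M → r j ≤ r (j + 1))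
    (z : ℕ → ℕ → ℂ)
    (hz : ∀ j i, 1 ≤ j → j ≤ M → i < r j → ‖z j i‖ ≤ 1) :
    ‖∑ i ∈ Fintype.piFinset (fun j : Fin M => Finset.range (r (j.1 + 1))),
        (∏ j : Fin M, z (j.1 + 1) (i j)) *
        ∏ j : Fin M, (if h : j.1 + 1 < M then
            Complex.exp (2 * Real.pi * Complex.I / r (j.1 + 2)) ^ (i j * i ⟨j.1 + 1, h⟩)
          else 1)‖
      ≤ Real.sqrt (∏ j ∈ Finset.range (M + 1), (r (j + 1) : ℝ)) := by
  have heq : (∑ i ∈ Fintype.piFinset (fun j : Fin M => Finset.range (r (j.1 + 1))),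
        (∏ j : Fin M, z (j.1 + 1) (i j)) *
        ∏ j : Fin M, (if h : j.1 + 1 < M then
            Complex.exp (2 * Real.pi * Complex.I / r (j.1 + 2)) ^ (i j * i ⟨j.1 + 1, h⟩)
          else 1)) = wQ r z M 0 := by
    rw [← wQ_eq r z M 0]
    refine Finset.sum_congr rfl fun i _ => ?_
    congr 1
  rw [heq]
  have hsum := wQ_l2 r z M hmono hpos hz
  have h0 : ‖wQ r z M 0‖ ^ 2 ≤
      ∑ k ∈ Finset.range (r (M + 1)), ‖wQ r z M k‖ ^ 2 := by
    refine Finset.single_le_sum (f := fun k => ‖wQ r z M k‖ ^ 2)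
      (fun k _ => by positivity) ?_
    exact Finset.mem_range.mpr (hpos (M+1) (by omega) (by omega))
  exact Real.le_sqrt_of_sq_le (h0.trans hsum)
end

section
/- Let (λ₁, …, λ_n) be real numbers that are linearly independent over ℚ. Then the image of the map t ↦ (e^{iλ₁t}, …, e^{iλₙt}) from ℝ to the torus 𝕋ⁿ is dense in 𝕋ⁿ. -/
open MeasureTheory Complex Real

noncomputable section

namespace KroneckerAux

noncomputable instance : MeasurableSpace Circle := borel Circle
instance : BorelSpace Circle := ⟨rfl⟩

variable {n : ℕ}

/-- The character of the torus associated to an integer vector. -/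
def char (m : Fin n → ℤ) : C(Fin n → Circle, ℂ) :=
  ⟨fun z => ((∏ i, z i ^ m i : Circle) : ℂ),
    continuous_subtype_val.comp (continuous_finset_prod (M := Circle) _ fun i _ =>
      (continuous_apply i).zpow (m i))⟩

@[simp, norm_cast] lemma coe_zpow (z : Circle) (m : ℤ) : ((z ^ m : Circle) : ℂ) = (z : ℂ) ^ m := by
  induction m using Int.induction_on with
  | zero => simp
  | succ k ih => rw [zpow_add_one, Circle.coe_mul, ih, zpow_add_one₀ z.coe_ne_zero]
  | pred k ih => rw [zpow_sub_one, Circle.coe_mul, ih, zpow_sub_one₀ z.coe_ne_zero, Circle.coe_inv]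

@[simp, norm_cast] lemma coe_prod {ι : Type*} (s : Finset ι) (f : ι → Circle) :
    ((∏ i ∈ s, f i : Circle) : ℂ) = ∏ i ∈ s, ((f i : ℂ)) :=
  map_prod (MonoidHom.mk ⟨(fun z : Circle => (z : ℂ)), Circle.coe_one⟩ Circle.coe_mul) f s

lemma char_apply (m : Fin n → ℤ) (z : Fin n → Circle) :
    char m z = ((∏ i, z i ^ m i : Circle) : ℂ) := rfl

@[simp] lemma char_zero : char (0 : Fin n → ℤ) = 1 := by
  ext z; simp [char_apply]

lemma char_mul (m m' : Fin n → ℤ) : char m * char m' = char (m + m') := by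
  ext z
  simp only [ContinuousMap.mul_apply, char_apply, ← Circle.coe_mul]
  norm_cast
  rw [← Finset.prod_mul_distrib]
  exact congrArg _ (Finset.prod_congr rfl fun i _ => by rw [Pi.add_apply, zpow_add (z i) (m i) (m' i)])

lemma star_char (m : Fin n → ℤ) : star (char m) = char (-m) := by
  ext z
  simp only [ContinuousMap.star_apply, char_apply, RCLike.star_def]
  rw [← Circle.coe_inv_eq_conj]
  norm_cast
  rw [← Finset.prod_inv_distrib]
  exact congrArg _ (Finset.prod_congr rfl fun i _ => by rw [Pi.neg_apply, zpow_neg])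

lemma norm_char_apply (m : Fin n → ℤ) (z : Fin n → Circle) : ‖char m z‖ = 1 := by
  simp [char_apply, Circle.norm_coe]

lemma char_mul_point (m : Fin n → ℤ) (g z : Fin n → Circle) :
    char m (g * z) = char m g * char m z := by
  simp only [char_apply, Pi.mul_apply, ← Circle.coe_mul]
  norm_cast
  rw [← Finset.prod_mul_distrib]
  exact congrArg _ (Finset.prod_congr rfl fun i _ => mul_zpow (g i) (z i) (m i))

variable (n) in
/-- Haar probability measure on the torus. -/
def mu : Measure (Fin n → Circle) := Measure.haarMeasure ⊤

instance : IsProbabilityMeasure (mu n) := ⟨Measure.haarMeasure_self⟩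
instance : (mu n).IsHaarMeasure := Measure.isHaarMeasure_haarMeasure ⊤

lemma integral_char_ne_zero {m : Fin n → ℤ} (hm : m ≠ 0) :
    ∫ z, char m z ∂(mu n) = 0 := by
  obtain ⟨i0, hi0⟩ : ∃ i, m i ≠ 0 := by
    by_contra h
    push_neg at h
    exact hm (funext h)
  set g : Fin n → Circle := Function.update (1 : Fin n → Circle) i0 (Circle.exp (π / m i0))
    with hg
  have hcg : char m g = -1 := by
    have h1 : (∏ i, g i ^ m i : Circle) = g i0 ^ m i0 :=
      Finset.prod_eq_single_of_mem i0 (Finset.mem_univ _) fun j _ hj => by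
        rw [hg, Function.update_of_ne hj, Pi.one_apply, one_zpow]
    have h2 : g i0 = Circle.exp (π / m i0) := by rw [hg, Function.update_self]
    rw [char_apply, h1, h2, coe_zpow, Circle.coe_exp, ← Complex.exp_int_mul]
    rw [show ((m i0 : ℂ) * (((π / m i0 : ℝ) : ℂ) * Complex.I)) = ((π : ℂ) / (m i0) * (m i0)) * Complex.I by push_cast; ring]
    rw [div_mul_cancel₀, Complex.exp_pi_mul_I]
    exact_mod_cast hi0
  have hinv : ∫ z, char m (g * z) ∂(mu n) = ∫ z, char m z ∂(mu n) :=
    integral_mul_left_eq_self (fun z => char m z) g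
  have hmul : ∫ z, char m (g * z) ∂(mu n) = char m g * ∫ z, char m z ∂(mu n) := by
    simp_rw [char_mul_point, ← smul_eq_mul, integral_smul]
  rw [hmul, hcg] at hinv
  have := sub_eq_zero.mpr hinv
  rw [show (-1 : ℂ) * ∫ z, char m z ∂(mu n) - ∫ z, char m z ∂(mu n)
      = (-2) * ∫ z, char m z ∂(mu n) by ring] at this
  simpa using this

/-- The orbit map. -/
def phi (lam : Fin n → ℝ) (t : ℝ) : Fin n → Circle := fun i => Circle.exp (lam i * t)

lemma char_phi (lam : Fin n → ℝ) (m : Fin n → ℤ) (t : ℝ) :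
    char m (phi lam t) = Complex.exp ((((∑ i, (m i : ℝ) * lam i : ℝ)) : ℂ) * Complex.I * t) := by
  rw [char_apply]
  simp only [phi, coe_prod, coe_zpow]
  rw [show (∏ i, ((Circle.exp (lam i * t) : ℂ)) ^ m i)
      = ∏ i, Complex.exp ((m i : ℂ) * ((lam i * t : ℝ) * Complex.I)) from
    Finset.prod_congr rfl fun i _ => by rw [Circle.coe_exp, Complex.exp_int_mul],
    ← Complex.exp_sum]
  congr 1
  push_cast
  rw [Finset.sum_mul, Finset.sum_mul]
  exact Finset.sum_congr rfl fun i _ => by ring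

lemma norm_intervalIntegral_char_phi (lam : Fin n → ℝ) (m : Fin n → ℤ)
    (hL : (∑ i, (m i : ℝ) * lam i) ≠ 0) (T : ℝ) :
    ‖∫ t in (0:ℝ)..T, char m (phi lam t)‖ ≤ 2 / |∑ i, (m i : ℝ) * lam i| := by
  set L : ℝ := ∑ i, (m i : ℝ) * lam i with hLdef
  have hc : ((L : ℂ) * Complex.I) ≠ 0 := by
    simp [Complex.ext_iff, hL]
  calc ‖∫ t in (0:ℝ)..T, char m (phi lam t)‖
      = ‖(Complex.exp ((L : ℂ) * Complex.I * T) - Complex.exp ((L : ℂ) * Complex.I * 0))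
          / ((L : ℂ) * Complex.I)‖ := by
        rw [show (∫ t in (0:ℝ)..T, char m (phi lam t))
            = ∫ t in (0:ℝ)..T, Complex.exp (((L:ℂ) * Complex.I) * t) from
          intervalIntegral.integral_congr fun t _ => char_phi lam m t,
          integral_exp_mul_complex hc]
        norm_num
    _ ≤ 2 / |L| := by
        rw [norm_div]
        have h1 : ‖Complex.exp ((L : ℂ) * Complex.I * T) - Complex.exp ((L : ℂ) * Complex.I * 0)‖ ≤ 2 := by
          refine (norm_sub_le _ _).trans ?_
          have e1 : ‖Complex.exp ((L : ℂ) * Complex.I * T)‖ = 1 := by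
            rw [show (L : ℂ) * Complex.I * T = ((L * T : ℝ) : ℂ) * Complex.I by push_cast; ring]
            exact Complex.norm_exp_ofReal_mul_I _
          have e2 : ‖Complex.exp ((L : ℂ) * Complex.I * 0)‖ = 1 := by
            rw [show (L : ℂ) * Complex.I * 0 = ((0 : ℝ) : ℂ) * Complex.I by push_cast; ring]
            exact Complex.norm_exp_ofReal_mul_I _
          rw [e1, e2]; norm_num
        have h2 : ‖(L : ℂ) * Complex.I‖ = |L| := by
          simp
        rw [h2]
        exact (div_le_div_iff_of_pos_right (abs_pos.mpr hL)).mpr h1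

lemma char_single (i : Fin n) (z : Fin n → Circle) :
    char (Pi.single i 1) z = (z i : ℂ) := by
  rw [char_apply]
  have : (∏ j, z j ^ (Pi.single i 1 : Fin n → ℤ) j : Circle) = z i ^ (Pi.single i 1 : Fin n → ℤ) i :=
    Finset.prod_eq_single_of_mem i (Finset.mem_univ _) fun j _ hj => by
      rw [Pi.single_eq_of_ne hj, zpow_zero]
  rw [this, Pi.single_eq_same, zpow_one]

lemma separatesPoints :
    (StarAlgebra.adjoin ℂ (Set.range (char (n := n)))).SeparatesPoints := by
  intro z w hzw
  obtain ⟨i, hi⟩ : ∃ i, z i ≠ w i := Function.ne_iff.mp hzw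
  refine ⟨_, ⟨char (Pi.single i 1),
    StarAlgebra.subset_adjoin ℂ _ ⟨Pi.single i 1, rfl⟩, rfl⟩, ?_⟩
  show char (Pi.single i 1) z ≠ char (Pi.single i 1) w
  rw [char_single, char_single]
  exact fun h => hi (Circle.coe_injective h)

/-- The range of `char` as a submonoid. -/
def charMonoid : Submonoid C(Fin n → Circle, ℂ) where
  carrier := Set.range (char (n := n))
  one_mem' := ⟨0, char_zero⟩
  mul_mem' := by rintro _ _ ⟨a, rfl⟩ ⟨b, rfl⟩; exact ⟨a + b, (char_mul a b).symm⟩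

lemma star_range_char : star (Set.range (char (n := n))) = Set.range (char (n := n)) := by
  ext P
  simp only [Set.mem_star, Set.mem_range]
  constructor
  · rintro ⟨m, hm⟩
    exact ⟨-m, by rw [← star_char, hm, star_star]⟩
  · rintro ⟨m, rfl⟩
    exact ⟨-m, by rw [star_char]⟩

lemma mem_span_of_mem_adjoin {P : C(Fin n → Circle, ℂ)}
    (h : P ∈ StarAlgebra.adjoin ℂ (Set.range (char (n := n)))) :
    P ∈ Submodule.span ℂ (Set.range (char (n := n))) := by
  have h2 : P ∈ Submodule.span ℂ
      (Submonoid.closure (Set.range (char (n := n)) ∪ star (Set.range (char (n := n)))) :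
        Set C(Fin n → Circle, ℂ)) := by
    rw [← StarAlgebra.adjoin_eq_span]
    exact h
  refine Submodule.span_le.mpr ?_ h2
  rw [star_range_char, Set.union_self]
  have : Submonoid.closure (Set.range (char (n := n))) ≤ charMonoid :=
    Submonoid.closure_le.mpr fun x hx => hx
  exact fun x hx => Submodule.subset_span (this hx)

end KroneckerAux

open KroneckerAux

set_option maxHeartbeats 1000000 in
/-- Kronecker's theorem: if `λ₁, …, λₙ` are real numbers linearly independent over `ℚ`, then
the map `t ↦ (e^{iλ₁t}, …, e^{iλₙt})` from `ℝ` to the torus `𝕋ⁿ` has dense range. -/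
theorem kronecker_dense_range (n : ℕ) (lam : Fin n → ℝ)
    (hlam : LinearIndependent ℚ lam) :
    DenseRange (fun t : ℝ => fun i : Fin n => Circle.exp (lam i * t)) := by
  classical
  have hphi : (fun t : ℝ => fun i : Fin n => Circle.exp (lam i * t)) = phi lam := rfl
  rw [hphi]
  -- nontrivial integer combinations of `lam` are nonzero
  have hL : ∀ m : Fin n → ℤ, m ≠ 0 → (∑ i, (m i : ℝ) * lam i) ≠ 0 := by
    intro m hm hsum
    refine hm (funext fun i => ?_)
    have h1 : ∑ i, ((m i : ℚ)) • lam i = 0 := by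
      rw [← hsum]
      exact Finset.sum_congr rfl fun i _ => by
        rw [Rat.smul_def]; norm_num
    have := Fintype.linearIndependent_iff.mp hlam (fun i => (m i : ℚ)) h1 i
    exact_mod_cast this
  by_contra hdense
  obtain ⟨x, hx⟩ : ∃ x, x ∉ closure (Set.range (phi lam)) := by
    by_contra h
    push_neg at h
    exact hdense fun x => h x
  -- Urysohn function
  have hdisj : Disjoint (closure (Set.range (phi lam))) {x} :=
    Set.disjoint_singleton_right.mpr hx
  obtain ⟨f, hf0, hf1, hf01⟩ := exists_continuous_zero_one_of_isClosed
    isClosed_closure (isClosed_singleton (x := x)) hdisj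
  -- complex version of f
  set fC : C(Fin n → Circle, ℂ) :=
    ⟨fun z => ((f z : ℝ) : ℂ), Complex.continuous_ofReal.comp f.continuous⟩ with hfC
  have hf_int : Integrable (fun z => f z) (mu n) :=
    f.continuous.integrable_of_hasCompactSupport
      ((isClosed_tsupport _).isCompact)
  have hfpos : 0 < ∫ z, f z ∂(mu n) := by
    rw [integral_pos_iff_support_of_nonneg (fun z => (hf01 z).1) hf_int]
    have hopen : IsOpen (Function.support f) :=
      isOpen_compl_singleton.preimage f.continuous
    refine hopen.measure_pos (mu n) ⟨x, ?_⟩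
    simp only [Function.mem_support, hf1 rfl]
    norm_num
  set ε : ℝ := (∫ z, f z ∂(mu n)) / 3 with hε
  have hεpos : 0 < ε := by positivity
  -- Stone–Weierstrass approximation
  have hsw := ContinuousMap.starSubalgebra_topologicalClosure_eq_top_of_separatesPoints
    (StarAlgebra.adjoin ℂ (Set.range (char (n := n)))) separatesPoints
  have hfC_mem : fC ∈ closure ((StarAlgebra.adjoin ℂ (Set.range (char (n := n)))) :
      Set C(Fin n → Circle, ℂ)) := by
    have : fC ∈ (StarAlgebra.adjoin ℂ (Set.range (char (n := n)))).topologicalClosure := by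
      rw [hsw]; trivial
    exact this
  obtain ⟨P, hPA, hPdist⟩ := Metric.mem_closure_iff.mp hfC_mem ε hεpos
  have hPnorm : ‖fC - P‖ < ε := by rwa [← dist_eq_norm]
  obtain ⟨c, hc⟩ := Finsupp.mem_span_range_iff_exists_finsupp.mp (mem_span_of_mem_adjoin hPA)
  -- sum over a fixed finset containing 0
  set s : Finset (Fin n → ℤ) := insert 0 c.support with hs
  have hPsum : P = ∑ m ∈ s, c m • char m := by
    rw [hs, ← hc]
    exact (Finsupp.sum_of_support_subset c (Finset.subset_insert _ _)
      (fun m a => a • char m) (fun m _ => zero_smul ℂ (char m)))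
  -- the constant coefficient equals the integral of P
  have hint_char : ∀ m : Fin n → ℤ, Integrable (fun z => char m z) (mu n) := fun m =>
    (char m).continuous.integrable_of_hasCompactSupport ((isClosed_tsupport _).isCompact)
  have hintP : ∫ z, P z ∂(mu n) = c 0 := by
    rw [hPsum]
    have : ∀ z, (∑ m ∈ s, c m • char m : C(Fin n → Circle, ℂ)) z
        = ∑ m ∈ s, c m • char m z := by
      intro z
      simp
    rw [integral_congr_ae (Filter.Eventually.of_forall this),
      integral_finset_sum (f := fun m z => c m • char m z) s
        (fun m _ => ((hint_char m).smul (c m) : Integrable (fun z => c m • char m z) (mu n)))]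
    rw [Finset.sum_congr rfl (fun m hm => by rw [integral_smul])]
    have : ∀ m ∈ s, c m • ∫ z, char m z ∂(mu n) = if m = 0 then c 0 else 0 := by
      intro m hm
      by_cases h0 : m = 0
      · subst h0
        simp [char_zero, integral_const, measure_univ]
      · rw [integral_char_ne_zero h0, smul_zero, if_neg h0]
    rw [Finset.sum_congr rfl this, Finset.sum_ite_eq' s 0 (fun _ => c 0),
      if_pos (Finset.mem_insert_self 0 _)]
  -- |c 0| is big
  have hintfC : ∫ z, fC z ∂(mu n) = ((∫ z, f z ∂(mu n) : ℝ) : ℂ) := integral_ofReal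
  have hPint : Integrable (fun z => P z) (mu n) :=
    P.continuous.integrable_of_hasCompactSupport ((isClosed_tsupport _).isCompact)
  have hfCint : Integrable (fun z => fC z) (mu n) :=
    fC.continuous.integrable_of_hasCompactSupport ((isClosed_tsupport _).isCompact)
  have hdiff : ‖(∫ z, fC z ∂(mu n)) - ∫ z, P z ∂(mu n)‖ ≤ ε := by
    rw [← integral_sub hfCint hPint]
    have : ∀ᵐ z ∂(mu n), ‖fC z - P z‖ ≤ ε := by
      refine Filter.Eventually.of_forall fun z => ?_
      calc ‖fC z - P z‖ = ‖(fC - P) z‖ := by simp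
        _ ≤ ‖fC - P‖ := ContinuousMap.norm_coe_le_norm _ _
        _ ≤ ε := hPnorm.le
    simpa using norm_integral_le_of_norm_le_const this
  have hc0_big : 2 * ε ≤ ‖c 0‖ := by
    have h3 : (∫ z, f z ∂(mu n)) = 3 * ε := by rw [hε]; ring
    have : ‖(∫ z, fC z ∂(mu n))‖ = 3 * ε := by
      rw [hintfC, Complex.norm_real, Real.norm_eq_abs, h3, abs_of_pos (by positivity)]
    calc 2 * ε = 3 * ε - ε := by ring
      _ ≤ ‖(∫ z, fC z ∂(mu n))‖ - ‖(∫ z, fC z ∂(mu n)) - ∫ z, P z ∂(mu n)‖ := by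
          rw [this]; linarith [hdiff]
      _ ≤ ‖∫ z, P z ∂(mu n)‖ := by
          have := norm_sub_norm_le (∫ z, fC z ∂(mu n)) ((∫ z, fC z ∂(mu n)) - ∫ z, P z ∂(mu n))
          simpa using this
      _ = ‖c 0‖ := by rw [hintP]
  -- time averages
  have hcont_orbit : ∀ m : Fin n → ℤ, Continuous fun t => char m (phi lam t) := by
    intro m
    exact (char m).continuous.comp (by
      apply continuous_pi
      intro i
      exact Circle.exp.continuous.comp (continuous_const.mul continuous_id))
  set C : ℝ := ∑ m ∈ s.erase 0, ‖c m‖ * (2 / |∑ i, (m i : ℝ) * lam i|) with hC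
  have hCnonneg : 0 ≤ C := Finset.sum_nonneg fun m _ => by positivity
  have key : ∀ T : ℝ, 0 < T → ‖c 0‖ * T ≤ ε * T + C := by
    intro T hT
    have hIT : (∫ t in (0:ℝ)..T, P (phi lam t))
        = c 0 • (T : ℂ) + ∑ m ∈ s.erase 0, c m • ∫ t in (0:ℝ)..T, char m (phi lam t) := by
      rw [hPsum]
      have h1 : ∀ t : ℝ, (∑ m ∈ s, c m • char m : C(Fin n → Circle, ℂ)) (phi lam t)
          = ∑ m ∈ s, c m • char m (phi lam t) := fun t => by simp
      rw [intervalIntegral.integral_congr (fun t _ => h1 t),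
        intervalIntegral.integral_finset_sum (f := fun m t => c m • char m (phi lam t))
          (fun m _ => (((hcont_orbit m).const_smul (c m)).intervalIntegrable 0 T))]
      rw [Finset.sum_congr rfl (fun m hm => intervalIntegral.integral_smul (c m) _)]
      have h0s : (0 : Fin n → ℤ) ∈ s := by rw [hs]; exact Finset.mem_insert_self _ _
      rw [← Finset.add_sum_erase _ _ h0s]
      congr 1
      have hone : ∀ t : ℝ, char (0 : Fin n → ℤ) (phi lam t) = (1 : ℂ) := fun t => by
        rw [char_zero]; rfl
      rw [intervalIntegral.integral_congr (fun t _ => hone t)]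
      simp
    have hnorm_orbit : ∀ t : ℝ, ‖P (phi lam t)‖ ≤ ε := by
      intro t
      have hft : f (phi lam t) = 0 := hf0 (subset_closure ⟨t, rfl⟩)
      have hfCt : fC (phi lam t) = 0 := by
        simp [hfC, hft]
      calc ‖P (phi lam t)‖ = ‖fC (phi lam t) - (fC - P) (phi lam t)‖ := by
            simp [hfCt]
        _ ≤ ‖fC (phi lam t)‖ + ‖(fC - P) (phi lam t)‖ := norm_sub_le _ _
        _ ≤ 0 + ‖fC - P‖ := by
            rw [hfCt, norm_zero]
            exact add_le_add le_rfl (ContinuousMap.norm_coe_le_norm _ _)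
        _ ≤ ε := by rw [zero_add]; exact hPnorm.le
    have hITnorm : ‖∫ t in (0:ℝ)..T, P (phi lam t)‖ ≤ ε * T := by
      have := intervalIntegral.norm_integral_le_of_norm_le_const
        (fun t _ => hnorm_orbit t) (C := ε) (a := (0:ℝ)) (b := T)
        (f := fun t => P (phi lam t))
      rwa [sub_zero, abs_of_pos hT] at this
    have htail : ‖∑ m ∈ s.erase 0, c m • ∫ t in (0:ℝ)..T, char m (phi lam t)‖ ≤ C := by
      refine (norm_sum_le _ _).trans ?_
      rw [hC]
      refine Finset.sum_le_sum fun m hm => ?_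
      rw [norm_smul]
      have hm0 : m ≠ 0 := Finset.ne_of_mem_erase hm
      exact mul_le_mul_of_nonneg_left
        (norm_intervalIntegral_char_phi lam m (hL m hm0) T) (norm_nonneg _)
    have hsplit : c 0 • (T : ℂ) = (∫ t in (0:ℝ)..T, P (phi lam t))
        - ∑ m ∈ s.erase 0, c m • ∫ t in (0:ℝ)..T, char m (phi lam t) := by
      rw [hIT]; ring
    calc ‖c 0‖ * T = ‖c 0 • (T : ℂ)‖ := by
          rw [norm_smul, Complex.norm_real, Real.norm_eq_abs, abs_of_pos hT]
      _ ≤ ‖∫ t in (0:ℝ)..T, P (phi lam t)‖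
          + ‖∑ m ∈ s.erase 0, c m • ∫ t in (0:ℝ)..T, char m (phi lam t)‖ := by
          rw [hsplit]
          exact norm_sub_le _ _
      _ ≤ ε * T + C := add_le_add hITnorm htail
  -- contradiction
  set T : ℝ := (C + 1) / ε with hT
  have hTpos : 0 < T := by positivity
  have h1 := key T hTpos
  have h2 : 2 * ε * T ≤ ε * T + C := le_trans (by nlinarith [hc0_big, hTpos.le]) h1
  have h3 : ε * T = C + 1 := by
    rw [hT]; field_simp
  nlinarith [hεpos, hTpos]

end
end

section
/- Let M ≥ 2, r₁ ≤ … ≤ r_M positive integers, ω_r = e^{2πi/r}. Let S ⊆ {0,…,r₁−1} × ⋯ × {0,…,r_M−1} be a set with the property that for every fixed (i₁,…,i_{M−1}), the set {i_M : (i₁,…,i_M) ∈ S} is an interval of integers (possibly empty). Then |Σ_{(i₁,…,i_M) ∈ S} ω_{r₂}^{i₁i₂} ⋯ ω_{r_M}^{i_{M−1}i_M}| ≤ C_M r₁ ⋯ r_{M−2} r_M (log(r_{M−1}+1) + 1) for a constant C_M depending only on M. -/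
open Complex Finset

noncomputable def Complex.abs : AbsoluteValue ℂ ℝ := IsAbsoluteValue.toAbsoluteValue (norm : ℂ → ℝ)

lemma Complex.abs_apply (z : ℂ) : Complex.abs z = Real.sqrt (Complex.normSq z) := rfl

lemma abs_one_sub_exp (θ : ℝ) (h0 : 0 ≤ θ) (h2 : θ ≤ 2 * Real.pi) :
    Complex.abs (1 - Complex.exp (θ * I)) = 2 * Real.sin (θ / 2) := by
  rw [Complex.exp_mul_I]
  rw [show (1 : ℂ) - (Complex.cos θ + Complex.sin θ * I)
      = ((1 - Real.cos θ : ℝ) : ℂ) + ((-Real.sin θ : ℝ) : ℂ) * I by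
    push_cast [Complex.ofReal_cos, Complex.ofReal_sin]; ring]
  rw [Complex.abs_apply, Complex.normSq_add_mul_I]
  rw [Real.sin_half_eq_sqrt h0 h2]
  rw [show (2:ℝ) * Real.sqrt ((1 - Real.cos θ) / 2) = Real.sqrt (2 - 2 * Real.cos θ) by
    rw [show (2:ℝ) - 2 * Real.cos θ = 2^2 * ((1 - Real.cos θ)/2) by ring,
      Real.sqrt_mul (by positivity), Real.sqrt_sq (by norm_num)]]
  congr 1
  nlinarith [Real.sin_sq_add_cos_sq θ]

lemma abs_one_sub_root_ge (N k : ℕ) (hk : 0 < k) (hkN : k < N) :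
    4 * ((min k (N - k) : ℕ) : ℝ) / N ≤
      Complex.abs (1 - Complex.exp (2 * Real.pi * I / N) ^ k) := by
  have hN : (0:ℝ) < N := by
    have : 0 < N := by omega
    exact_mod_cast this
  have hexp : Complex.exp (2 * Real.pi * I / N) ^ k
      = Complex.exp ((2 * Real.pi * k / N : ℝ) * I) := by
    rw [← Complex.exp_nat_mul]
    congr 1
    push_cast
    ring
  set θ : ℝ := 2 * Real.pi * k / N with hθ
  have hθ0 : 0 ≤ θ := by positivity
  have hkR : (k:ℝ) ≤ N := by exact_mod_cast hkN.le
  have hθ2 : θ ≤ 2 * Real.pi := by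
    rw [hθ, div_le_iff₀ hN]
    nlinarith [Real.pi_pos]
  rw [hexp, abs_one_sub_exp θ hθ0 hθ2]
  have hhalf : θ / 2 = Real.pi * k / N := by rw [hθ]; ring
  have key : 2 * ((min k (N - k) : ℕ) : ℝ) / N ≤ Real.sin (Real.pi * k / N) := by
    rcases le_or_gt (2 * k) N with h | h
    · have hmin : ((min k (N-k) : ℕ) : ℝ) ≤ (k:ℝ) := by
        exact_mod_cast (min_le_left k (N-k))
      have h1 : Real.pi * k / N ≤ Real.pi / 2 := by
        rw [div_le_div_iff₀ hN (by norm_num)]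
        have : (2:ℝ) * k ≤ N := by exact_mod_cast h
        nlinarith [Real.pi_pos]
      have h2 := Real.mul_le_sin (x := Real.pi * k / N) (by positivity) h1
      calc 2 * ((min k (N - k) : ℕ) : ℝ) / N ≤ 2 * (k:ℝ) / N := by gcongr
          _ = 2 / Real.pi * (Real.pi * k / N) := by
            field_simp
          _ ≤ _ := h2
    · have hmin : ((min k (N-k) : ℕ) : ℝ) ≤ (N:ℝ) - k := by
        have h' : ((min k (N-k) : ℕ) : ℝ) ≤ ((N - k : ℕ) : ℝ) := by
          exact_mod_cast (min_le_right k (N-k))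
        rwa [Nat.cast_sub hkN.le] at h'
      have hsin : Real.sin (Real.pi * k / N) = Real.sin (Real.pi * ((N:ℝ) - k) / N) := by
        rw [show Real.pi * ((N:ℝ) - k) / N = Real.pi - Real.pi * k / N by field_simp,
          Real.sin_pi_sub]
      have h1 : Real.pi * ((N:ℝ) - k) / N ≤ Real.pi / 2 := by
        rw [div_le_div_iff₀ hN (by norm_num)]
        have : (N:ℝ) < 2 * k := by exact_mod_cast h
        nlinarith [Real.pi_pos]
      have hNk : (0:ℝ) ≤ (N:ℝ) - k := by linarith
      have h2 := Real.mul_le_sin (x := Real.pi * ((N:ℝ) - k) / N)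
        (by positivity) h1
      rw [hsin]
      calc 2 * ((min k (N - k) : ℕ) : ℝ) / N ≤ 2 * ((N:ℝ) - k) / N := by gcongr
          _ = 2 / Real.pi * (Real.pi * ((N:ℝ)-k) / N) := by
            field_simp
          _ ≤ _ := h2
  rw [hhalf,
    show 4 * ((min k (N - k) : ℕ) : ℝ) / N = 2 * (2 * ((min k (N - k) : ℕ) : ℝ) / N) by ring]
  linarith

lemma geom_interval_bound (z : ℂ) (hz : Complex.abs z = 1) (hz1 : z ≠ 1) (a b : ℕ) :
    Complex.abs (∑ m ∈ Finset.Icc a b, z ^ m) ≤ 2 / Complex.abs (1 - z) := by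
  rcases le_or_gt a b with hab | hab
  · have : Finset.Icc a b = Finset.Ico a (b+1) := by
      rw [Finset.Ico_add_one_right_eq_Icc]
    rw [this, geom_sum_Ico hz1 (by omega)]
    rw [map_div₀]
    have h1 : Complex.abs (z ^ (b+1) - z ^ a) ≤ 2 := by
      calc Complex.abs (z ^ (b+1) - z ^ a)
          ≤ Complex.abs (z ^ (b+1)) + Complex.abs (z ^ a) := by
            exact (AbsoluteValue.sub_le_add _ _ _)
        _ = 2 := by rw [map_pow, map_pow, hz]; norm_num
    have h2 : Complex.abs (z - 1) = Complex.abs (1 - z) := by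
      rw [← AbsoluteValue.map_neg Complex.abs]; ring_nf
    rw [h2]
    have hpos : 0 < Complex.abs (1 - z) := by
      simp only [AbsoluteValue.pos_iff, sub_ne_zero]
      exact fun h => hz1 h.symm
    gcongr
  · rw [Finset.Icc_eq_empty (by omega)]
    simp only [Finset.sum_empty, map_zero]
    positivity

lemma harmonic_bound (n : ℕ) :
    ∑ k ∈ Finset.Icc 1 n, (1 / k : ℝ) ≤ Real.log (n + 1) + 1 := by
  have h1 : ∑ k ∈ Finset.Icc 1 n, (1 / k : ℝ) = (harmonic n : ℝ) := by
    rw [harmonic]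
    rw [show Finset.Icc 1 n = Finset.Ico 1 (n+1) by rw [Finset.Ico_add_one_right_eq_Icc]]
    rw [Finset.sum_Ico_eq_sum_range]
    simp [one_div, add_comm]
  rw [h1]
  have h2 := harmonic_le_one_add_log n
  have h3 : ((harmonic n : ℚ) : ℝ) ≤ 1 + Real.log n := by exact_mod_cast h2
  have h4 : Real.log n ≤ Real.log (n + 1) := by
    rcases Nat.eq_zero_or_pos n with h | h
    · simp only [h, Nat.cast_zero, Real.log_zero, Nat.cast_zero, zero_add, Real.log_one]
      norm_num
    · apply Real.log_le_log (by positivity)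
      push_cast; linarith
  linarith

lemma min_inv_sum (N L : ℕ) (hL1 : 1 ≤ L) (hL : L ≤ N) :
    ∑ k ∈ Finset.Icc 1 (L-1), (1 / ((min k (N-k) : ℕ) : ℝ))
      ≤ 2 * (Real.log (L + 1) + 1) := by
  have step1 : ∑ k ∈ Finset.Icc 1 (L-1), (1 / ((min k (N-k) : ℕ) : ℝ))
      ≤ ∑ k ∈ Finset.Icc 1 (L-1), ((1 / k : ℝ) + 1 / ((L - k : ℕ) : ℝ)) := by
    apply Finset.sum_le_sum
    intro k hk
    simp only [Finset.mem_Icc] at hk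
    obtain ⟨hk1, hk2⟩ := hk
    have hLk : 1 ≤ L - k := by omega
    rcases le_total k (N - k) with h | h
    · rw [min_eq_left h]
      have : (0:ℝ) ≤ 1 / ((L - k : ℕ) : ℝ) := by positivity
      linarith
    · rw [min_eq_right h]
      have h1 : (1 / ((N - k : ℕ) : ℝ)) ≤ 1 / ((L - k : ℕ) : ℝ) := by
        apply one_div_le_one_div_of_le
        · exact_mod_cast hLk
        · exact_mod_cast Nat.sub_le_sub_right hL k
      have : (0:ℝ) ≤ 1 / (k : ℝ) := by positivity
      linarith
  have step2 : ∑ k ∈ Finset.Icc 1 (L-1), (1 / ((L - k : ℕ) : ℝ))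
      = ∑ k ∈ Finset.Icc 1 (L-1), (1 / k : ℝ) := by
    apply Finset.sum_nbij' (i := fun k => L - k) (j := fun k => L - k)
    all_goals intro a ha
    all_goals simp only [Finset.mem_Icc] at *
    all_goals omega
  have step3 : ∑ k ∈ Finset.Icc 1 (L-1), (1 / k : ℝ) ≤ Real.log (L + 1) + 1 := by
    have := harmonic_bound (L-1)
    have hc : ((L - 1 : ℕ) : ℝ) + 1 = (L : ℝ) := by
      have : L - 1 + 1 = L := by omega
      exact_mod_cast congrArg (Nat.cast (R := ℝ)) this
    rw [hc] at this
    have : Real.log L ≤ Real.log (L + 1) := by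
      apply Real.log_le_log (by exact_mod_cast hL1)
      linarith
    linarith [harmonic_bound (L-1), this]
  rw [Finset.sum_add_distrib, step2] at step1
  linarith

noncomputable def Bnd (N k : ℕ) : ℝ :=
  if k = 0 then (N : ℝ) else (N : ℝ) / (2 * ((min k (N - k) : ℕ) : ℝ))

lemma Bnd_nonneg (N k : ℕ) : 0 ≤ Bnd N k := by
  unfold Bnd; split <;> positivity

lemma abs_root_eq_one (N : ℕ) : Complex.abs (Complex.exp (2 * Real.pi * I / N)) = 1 := by
  rw [show (2 : ℂ) * Real.pi * I / N = ((2 * Real.pi / N : ℝ) : ℂ) * I by push_cast; ring]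
  exact Complex.norm_exp_ofReal_mul_I _

lemma fibre_sum_bound (N : ℕ) (hN : 0 < N) (T : Finset ℕ) (hT : T ⊆ Finset.range N)
    (hint : ∀ a ∈ T, ∀ b ∈ T, ∀ m, a ≤ m → m ≤ b → m ∈ T) (k : ℕ) (hk : k < N) :
    Complex.abs (∑ m ∈ T, Complex.exp (2 * Real.pi * I / N) ^ (k * m)) ≤ Bnd N k := by
  rcases Nat.eq_zero_or_pos k with rfl | hk0
  · -- trivial bound: card ≤ N
    unfold Bnd
    simp only [if_pos rfl]
    calc Complex.abs (∑ m ∈ T, Complex.exp (2 * Real.pi * I / N) ^ (0 * m))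
        ≤ ∑ m ∈ T, Complex.abs (Complex.exp (2 * Real.pi * I / N) ^ (0 * m)) :=
          AbsoluteValue.sum_le _ _ _
      _ = ∑ m ∈ T, 1 := by
          apply Finset.sum_congr rfl
          intro m _
          rw [map_pow, abs_root_eq_one, one_pow]
      _ = (T.card : ℝ) := by simp
      _ ≤ (N : ℝ) := by
          have := Finset.card_le_card hT
          rw [Finset.card_range] at this
          exact_mod_cast this
  · unfold Bnd
    rw [if_neg (by omega)]
    set z : ℂ := Complex.exp (2 * Real.pi * I / N) ^ k with hz
    have hzabs : Complex.abs z = 1 := by rw [hz, map_pow, abs_root_eq_one, one_pow]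
    have hlb := abs_one_sub_root_ge N k hk0 hk
    have hminpos : (0:ℝ) < ((min k (N - k) : ℕ) : ℝ) := by
      have : 0 < min k (N-k) := by omega
      exact_mod_cast this
    have h1z : (0:ℝ) < Complex.abs (1 - z) := by
      apply lt_of_lt_of_le ?_ hlb
      positivity
    have hz1 : z ≠ 1 := by
      intro h
      rw [h] at h1z
      simp at h1z
    rcases T.eq_empty_or_nonempty with rfl | hne
    · simp only [Finset.sum_empty, map_zero]
      positivity
    · have hTIcc : T = Finset.Icc (T.min' hne) (T.max' hne) := by
        apply Finset.Subset.antisymm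
        · intro m hm
          simp only [Finset.mem_Icc]
          exact ⟨Finset.min'_le _ _ hm, Finset.le_max' _ _ hm⟩
        · intro m hm
          simp only [Finset.mem_Icc] at hm
          exact hint _ (T.min'_mem hne) _ (T.max'_mem hne) m hm.1 hm.2
      have hsum : ∑ m ∈ T, Complex.exp (2 * Real.pi * I / N) ^ (k * m)
          = ∑ m ∈ Finset.Icc (T.min' hne) (T.max' hne), z ^ m := by
        rw [← hTIcc]
        apply Finset.sum_congr rfl
        intro m _
        rw [hz, ← pow_mul]
      rw [hsum]
      calc Complex.abs (∑ m ∈ Finset.Icc (T.min' hne) (T.max' hne), z ^ m)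
          ≤ 2 / Complex.abs (1 - z) := geom_interval_bound z hzabs hz1 _ _
        _ ≤ 2 / (4 * ((min k (N - k) : ℕ) : ℝ) / N) := by
            apply div_le_div_of_nonneg_left (by norm_num) (by positivity) hlb
        _ = (N : ℝ) / (2 * ((min k (N - k) : ℕ) : ℝ)) := by
            field_simp
            ring

lemma Bnd_sum (N L : ℕ) (hL1 : 1 ≤ L) (hL : L ≤ N) :
    ∑ k ∈ Finset.range L, Bnd N k ≤ 2 * (N : ℝ) * (Real.log (L + 1) + 1) := by
  have hsplit : Finset.range L = insert 0 (Finset.Icc 1 (L-1)) := by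
    ext x
    simp only [Finset.mem_range, Finset.mem_insert, Finset.mem_Icc]
    omega
  rw [hsplit, Finset.sum_insert (by simp)]
  have h0 : Bnd N 0 = (N:ℝ) := by unfold Bnd; simp
  have h1 : ∑ k ∈ Finset.Icc 1 (L-1), Bnd N k
      = (N:ℝ)/2 * ∑ k ∈ Finset.Icc 1 (L-1), (1 / ((min k (N-k) : ℕ) : ℝ)) := by
    rw [Finset.mul_sum]
    apply Finset.sum_congr rfl
    intro k hk
    simp only [Finset.mem_Icc] at hk
    unfold Bnd
    rw [if_neg (by omega)]
    field_simp
  have h2 := min_inv_sum N L hL1 hL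
  have hlog : (0:ℝ) ≤ Real.log (L + 1) := by
    apply Real.log_nonneg
    have : (1:ℝ) ≤ L := by exact_mod_cast hL1
    linarith
  have hN0 : (0:ℝ) ≤ N := by positivity
  rw [h0, h1]
  have h3 : (N:ℝ)/2 * ∑ k ∈ Finset.Icc 1 (L-1), (1 / ((min k (N-k) : ℕ) : ℝ))
      ≤ (N:ℝ)/2 * (2 * (Real.log (L + 1) + 1)) := by
    apply mul_le_mul_of_nonneg_left h2 (by positivity)
  nlinarith

set_option maxHeartbeats 1000000 in
/-- Key estimate: if `S` is a set of index tuples `(i₁, …, i_M)`, `i_j < r_j`, such that for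
every fixed prefix `(i₁, …, i_{M-1})` the fibre in the last coordinate is an interval of
integers, then `|Σ_{i ∈ S} ω_{r₂}^{i₁i₂} ⋯ ω_{r_M}^{i_{M-1}i_M}|
≤ C_M r₁ ⋯ r_{M-2} r_M (log(r_{M-1}+1) + 1)` with `C_M` depending only on `M`. -/
theorem key_estimate_partial_sums (M : ℕ) (hM : 2 ≤ M) :
    ∃ C : ℝ, 0 < C ∧
      ∀ r : ℕ → ℕ, (∀ j, 1 ≤ j → j ≤ M → 0 < r j) → (∀ j, 1 ≤ j → j ≤ M - 1 → r j ≤ r (j + 1)) →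
      ∀ S : Finset (Fin M → ℕ),
        (S ⊆ Fintype.piFinset fun j : Fin M => Finset.range (r (j.1 + 1))) →
        (∀ f ∈ S, ∀ g ∈ S, (∀ j : Fin M, j.1 + 1 < M → f j = g j) →
          ∀ m : ℕ, f ⟨M - 1, by omega⟩ ≤ m → m ≤ g ⟨M - 1, by omega⟩ →
            Function.update f ⟨M - 1, by omega⟩ m ∈ S) →
        ‖∑ i ∈ S, ∏ j : Fin M, (if h : j.1 + 1 < M then
              Complex.exp (2 * Real.pi * Complex.I / r (j.1 + 2)) ^ (i j * i ⟨j.1 + 1, h⟩)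
            else 1)‖
          ≤ C * (∏ j ∈ Finset.Icc 1 (M - 2), (r j : ℝ)) * (r M : ℝ) *
              (Real.log ((r (M - 1) : ℝ) + 1) + 1) := by
  refine ⟨2, by norm_num, ?_⟩
  intro r hr hmono S hSsub hSint
  change Complex.abs _ ≤ _
  set N := r M with hNdef
  set L := r (M - 1) with hLdef
  have hN : 0 < N := hr M (by omega) le_rfl
  have hL : 0 < L := hr (M-1) (by omega) (by omega)
  have hLN : L ≤ N := by
    have h := hmono (M-1) (by omega) le_rfl
    rwa [show M - 1 + 1 = M by omega] at h
  set last : Fin M := ⟨M - 1, by omega⟩ with hlast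
  set pen : Fin M := ⟨M - 2, by omega⟩ with hpen
  have hpenlast : pen ≠ last := by
    simp only [hpen, hlast, ne_eq, Fin.mk.injEq]
    omega
  set g : (Fin M → ℕ) → ℂ := fun i => ∏ j : Fin M, (if h : j.1 + 1 < M then
      Complex.exp (2 * Real.pi * Complex.I / r (j.1 + 2)) ^ (i j * i ⟨j.1 + 1, h⟩)
    else 1) with hg
  set P : (Fin M → ℕ) → (Fin M → ℕ) := fun i => Function.update i last 0 with hP
  -- members of S have coordinates < r
  have hcoord : ∀ i ∈ S, ∀ j : Fin M, i j < r (j.1 + 1) := by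
    intro i hi j
    have := hSsub hi
    rw [Fintype.mem_piFinset] at this
    simpa using this j
  -- elements of fibre are updates of p
  have hfib : ∀ p, ∀ i ∈ S.filter (fun i => P i = p), i = Function.update p last (i last) := by
    intro p i hi
    rw [Finset.mem_filter] at hi
    funext j
    by_cases hj : j = last
    · subst hj; rw [Function.update_self]
    · rw [Function.update_of_ne hj, ← hi.2, hP]
      simp only
      rw [Function.update_of_ne hj]
  -- Step A : fibrewise decomposition
  have stepA : Complex.abs (∑ i ∈ S, g i)
      ≤ ∑ p ∈ S.image P, Complex.abs (∑ i ∈ S.filter (fun i => P i = p), g i) := by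
    rw [← Finset.sum_fiberwise_of_maps_to (fun i hi => Finset.mem_image_of_mem P hi) g]
    exact AbsoluteValue.sum_le _ _ _
  have hppen : ∀ p ∈ S.image P, p pen < L := by
    intro p hp
    rw [Finset.mem_image] at hp
    obtain ⟨i, hi, rfl⟩ := hp
    have h1 : P i pen = i pen := by
      rw [hP]; simp only; rw [Function.update_of_ne hpenlast]
    rw [h1]
    have := hcoord i hi pen
    rwa [hpen, show M - 2 + 1 = M - 1 by omega] at this
  have hlastval : last.1 = M - 1 := by rw [hlast]
  have hpenval : pen.1 = M - 2 := by rw [hpen]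
  -- Step B : each fibre bounded by Bnd N (p pen)
  have stepB : ∀ p ∈ S.image P,
      Complex.abs (∑ i ∈ S.filter (fun i => P i = p), g i) ≤ Bnd N (p pen) := by
    intro p hp
    set T : Finset ℕ := (S.filter (fun i => P i = p)).image (fun i => i last) with hT
    have hinj : ∀ i₁ ∈ S.filter (fun i => P i = p), ∀ i₂ ∈ S.filter (fun i => P i = p),
        i₁ last = i₂ last → i₁ = i₂ := by
      intro i₁ h₁ i₂ h₂ he
      rw [hfib p i₁ h₁, hfib p i₂ h₂, he]
    set c : Fin M → ℂ := fun j => if h : j.1 + 1 < M then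
        Complex.exp (2 * Real.pi * Complex.I / r (j.1 + 2)) ^ (p j * p ⟨j.1 + 1, h⟩)
      else 1 with hc
    have hfactor : ∀ m : ℕ, g (Function.update p last m)
        = (∏ j ∈ Finset.univ.erase pen, c j)
            * Complex.exp (2 * Real.pi * Complex.I / N) ^ (p pen * m) := by
      intro m
      rw [hg]
      simp only
      rw [← Finset.prod_erase_mul Finset.univ _ (Finset.mem_univ pen)]
      congr 1
      · apply Finset.prod_congr rfl
        intro j hj
        rw [Finset.mem_erase] at hj
        rw [hc]
        by_cases h : j.1 + 1 < M
        · rw [dif_pos h]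
          simp only
          rw [dif_pos h]
          have hjne : j ≠ last := by
            intro e
            rw [e, hlastval] at h
            omega
          have hj2 : (⟨j.1 + 1, h⟩ : Fin M) ≠ last := by
            intro e
            apply hj.1
            have := congrArg Fin.val e
            simp only [hlastval] at this
            apply Fin.ext
            rw [hpenval]
            omega
          rw [Function.update_of_ne hjne, Function.update_of_ne hj2]
        · rw [dif_neg h]
          simp only
          rw [dif_neg h]
      · have hpen1 : pen.1 + 1 < M := by omega
        rw [dif_pos hpen1]
        have h1 : Function.update p last m pen = p pen := Function.update_of_ne hpenlast _ _
        have h2 : (⟨pen.1 + 1, hpen1⟩ : Fin M) = last := by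
          apply Fin.ext
          simp only [hlastval, hpenval]
          omega
        rw [h1, h2, Function.update_self]
        rw [show pen.1 + 2 = M by omega]
    have hsum : ∑ i ∈ S.filter (fun i => P i = p), g i
        = (∏ j ∈ Finset.univ.erase pen, c j)
            * ∑ m ∈ T, Complex.exp (2 * Real.pi * Complex.I / N) ^ (p pen * m) := by
      rw [Finset.mul_sum, hT, Finset.sum_image hinj]
      apply Finset.sum_congr rfl
      intro i hi
      rw [← hfactor (i last), ← hfib p i hi]
    have habsA : Complex.abs (∏ j ∈ Finset.univ.erase pen, c j) = 1 := by
      rw [map_prod]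
      apply Finset.prod_eq_one
      intro j _
      rw [hc]
      by_cases h : j.1 + 1 < M
      · simp only
        rw [dif_pos h, map_pow, abs_root_eq_one, one_pow]
      · simp only
        rw [dif_neg h, map_one]
    have hTsub : T ⊆ Finset.range N := by
      intro m hm
      rw [hT, Finset.mem_image] at hm
      obtain ⟨i, hi, rfl⟩ := hm
      rw [Finset.mem_filter] at hi
      rw [Finset.mem_range]
      have := hcoord i hi.1 last
      rwa [hlastval, show M - 1 + 1 = M by omega] at this
    have hTint : ∀ a ∈ T, ∀ b ∈ T, ∀ m, a ≤ m → m ≤ b → m ∈ T := by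
      intro a ha b hb m ham hmb
      rw [hT, Finset.mem_image] at ha hb
      obtain ⟨i₁, hi₁, rfl⟩ := ha
      obtain ⟨i₂, hi₂, rfl⟩ := hb
      rw [Finset.mem_filter] at hi₁ hi₂
      have hpre : ∀ j : Fin M, j.1 + 1 < M → i₁ j = i₂ j := by
        intro j hj
        have hjne : j ≠ last := by
          intro e
          rw [e, hlastval] at hj
          omega
        have e1 : i₁ j = P i₁ j := by
          rw [hP]; simp only; rw [Function.update_of_ne hjne]
        have e2 : i₂ j = P i₂ j := by
          rw [hP]; simp only; rw [Function.update_of_ne hjne]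
        rw [e1, e2, hi₁.2, hi₂.2]
      have hupd : Function.update i₁ last m ∈ S :=
        hSint i₁ hi₁.1 i₂ hi₂.1 hpre m ham hmb
      rw [hT, Finset.mem_image]
      refine ⟨Function.update i₁ last m, ?_, Function.update_self _ _ _⟩
      rw [Finset.mem_filter]
      refine ⟨hupd, ?_⟩
      rw [hP]
      simp only
      rw [Function.update_idem]
      have : Function.update i₁ last 0 = P i₁ := rfl
      rw [this, hi₁.2]
    have hk : p pen < N := lt_of_lt_of_le (hppen p hp) hLN
    rw [hsum, map_mul, habsA, one_mul]
    exact fibre_sum_bound N hN T hTsub hTint (p pen) hk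
  have cardbound : ∀ k : ℕ,
      (((S.image P).filter (fun p => p pen = k)).card : ℝ)
        ≤ ∏ j ∈ Finset.Icc 1 (M - 2), (r j : ℝ) := by
    intro k
    have hcard : ((S.image P).filter (fun p => p pen = k)).card
        ≤ (Fintype.piFinset fun j : Fin (M - 2) => Finset.range (r (j.1 + 1))).card := by
      have hMM : M - 2 ≤ M := by omega
      apply Finset.card_le_card_of_injOn
        (f := fun p (j : Fin (M - 2)) => p (Fin.castLE hMM j))
      · intro p hp
        rw [Finset.mem_coe, Finset.mem_filter, Finset.mem_image] at hp
        obtain ⟨⟨i, hi, rfl⟩, hk'⟩ := hp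
        rw [Finset.mem_coe, Fintype.mem_piFinset]
        intro j
        rw [Finset.mem_range]
        have hjlt := j.isLt
        have hjne : Fin.castLE hMM j ≠ last := by
          intro e
          have := congrArg Fin.val e
          rw [hlastval] at this
          simp only [Fin.coe_castLE] at this
          omega
        have e1 : P i (Fin.castLE hMM j) = i (Fin.castLE hMM j) := by
          rw [hP]; simp only; rw [Function.update_of_ne hjne]
        beta_reduce
        rw [e1]
        have := hcoord i hi (Fin.castLE hMM j)
        simpa using this
      · intro p₁ h₁ p₂ h₂ heq
        rw [Finset.mem_coe, Finset.mem_filter, Finset.mem_image] at h₁ h₂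
        obtain ⟨⟨i₁, hi₁, rfl⟩, hk₁⟩ := h₁
        obtain ⟨⟨i₂, hi₂, rfl⟩, hk₂⟩ := h₂
        funext j
        rcases lt_trichotomy j.1 (M - 2) with hj | hj | hj
        · have := congrFun heq (⟨j.1, hj⟩ : Fin (M - 2))
          simp only at this
          have hje : Fin.castLE hMM (⟨j.1, hj⟩ : Fin (M - 2)) = j := Fin.ext rfl
          rwa [hje] at this
        · have hje : j = pen := by apply Fin.ext; rw [hpenval]; exact hj
          rw [hje, hk₁, hk₂]
        · have hje : j = last := by apply Fin.ext; rw [hlastval]; omega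
          rw [hje, hP]
          simp only
          rw [Function.update_self, Function.update_self]
    have hpif : ((Fintype.piFinset fun j : Fin (M - 2) => Finset.range (r (j.1 + 1))).card : ℝ)
        = ∏ j ∈ Finset.Icc 1 (M - 2), (r j : ℝ) := by
      rw [Fintype.card_piFinset]
      push_cast
      simp only [Finset.card_range]
      rw [Fin.prod_univ_eq_prod_range (fun j => (r (j + 1) : ℝ)) (M - 2)]
      rw [show Finset.Icc 1 (M - 2) = Finset.Ico 1 (M - 2 + 1) by rw [Finset.Ico_add_one_right_eq_Icc]]
      rw [Finset.prod_Ico_eq_prod_range]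
      apply Finset.prod_congr (by norm_num)
      intro j _
      rw [add_comm]
    rw [← hpif]
    exact_mod_cast hcard
  have stepC : ∑ p ∈ S.image P, Bnd N (p pen)
      ≤ (∏ j ∈ Finset.Icc 1 (M - 2), (r j : ℝ)) * ∑ k ∈ Finset.range L, Bnd N k := by
    rw [← Finset.sum_fiberwise_of_maps_to (g := fun p => p pen) (t := Finset.range L)
      (fun p hp => Finset.mem_range.2 (hppen p hp)) (fun p => Bnd N (p pen)),
      Finset.mul_sum]
    apply Finset.sum_le_sum
    intro k _
    calc ∑ p ∈ (S.image P).filter (fun p => p pen = k), Bnd N (p pen)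
        = ∑ p ∈ (S.image P).filter (fun p => p pen = k), Bnd N k := by
          apply Finset.sum_congr rfl
          intro p hp
          rw [Finset.mem_filter] at hp
          rw [hp.2]
      _ = (((S.image P).filter (fun p => p pen = k)).card : ℝ) * Bnd N k := by
          rw [Finset.sum_const, nsmul_eq_mul]
      _ ≤ (∏ j ∈ Finset.Icc 1 (M - 2), (r j : ℝ)) * Bnd N k := by
          exact mul_le_mul_of_nonneg_right (cardbound k) (Bnd_nonneg N k)
  -- combine
  have hprodpos : (0:ℝ) ≤ ∏ j ∈ Finset.Icc 1 (M - 2), (r j : ℝ) := by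
    apply Finset.prod_nonneg; intro j _; positivity
  calc Complex.abs (∑ i ∈ S, g i)
      ≤ ∑ p ∈ S.image P, Complex.abs (∑ i ∈ S.filter (fun i => P i = p), g i) := stepA
    _ ≤ ∑ p ∈ S.image P, Bnd N (p pen) := Finset.sum_le_sum stepB
    _ ≤ (∏ j ∈ Finset.Icc 1 (M - 2), (r j : ℝ)) * ∑ k ∈ Finset.range L, Bnd N k := stepC
    _ ≤ (∏ j ∈ Finset.Icc 1 (M - 2), (r j : ℝ)) * (2 * (N : ℝ) * (Real.log (L + 1) + 1)) := by
        exact mul_le_mul_of_nonneg_left (Bnd_sum N L hL hLN) hprodpos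
    _ = 2 * (∏ j ∈ Finset.Icc 1 (M - 2), (r j : ℝ)) * (N : ℝ) *
          (Real.log ((L : ℝ) + 1) + 1) := by push_cast; ring
end
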